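/- The minimum distance of the Reed-Muller code RM(r,m) is 2^{m-r}: every nonzero multilinear polynomial of degree ≤ r in m variables over F_2 has at least 2^{m-r} nonzero evaluations on F_2^m. -/

import Mathlib

open MvPolynomial

private noncomputable def Ncount {n : ℕ} (p : MvPolynomial (Fin n) (ZMod 2)) : ℕ :=
  (Finset.univ.filter fun x : Fin n → ZMod 2 => MvPolynomial.eval x p ≠ 0).card

private lemma Ncount_zero {n : ℕ} : Ncount (0 : MvPolynomial (Fin n) (ZMod 2)) = 0 := by
  simp [Ncount]

private lemma ml_totalDegree {n : ℕ} (p : MvPolynomial (Fin n) (ZMod 2))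
    (hml : ∀ d ∈ p.support, ∀ i, d i ≤ 1) : p.totalDegree ≤ n := by
  apply Finset.sup_le
  intro d hd
  calc d.sum (fun _ e => e) = ∑ i, d i := Finsupp.sum_fintype _ _ (fun _ => rfl)
    _ ≤ ∑ _i : Fin n, 1 := Finset.sum_le_sum fun i _ => hml d hd i
    _ = n := by simp

private lemma split_count {n : ℕ} (p : MvPolynomial (Fin (n + 1)) (ZMod 2))
    (q s : MvPolynomial (Fin n) (ZMod 2))
    (heval : ∀ (y : ZMod 2) (x : Fin n → ZMod 2),
      MvPolynomial.eval (Fin.cons y x) p = MvPolynomial.eval x q + y * MvPolynomial.eval x s) :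
    Ncount p = Ncount q + Ncount (q + s) := by
  classical
  have h1 : ∀ a : ZMod 2, a ≠ 0 → a = 1 := by decide
  unfold Ncount
  rw [← Finset.card_filter_add_card_filter_not
    (s := Finset.univ.filter fun v : Fin (n+1) → ZMod 2 => MvPolynomial.eval v p ≠ 0)
    (fun v => v 0 = 0), Finset.filter_filter, Finset.filter_filter]
  congr 1
  · refine Finset.card_bij' (fun v _ => Fin.tail v) (fun x _ => Fin.cons (0 : ZMod 2) x) ?_ ?_ ?_ ?_
    · intro v hv
      simp only [Finset.mem_filter, Finset.mem_univ, true_and] at hv ⊢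
      obtain ⟨hv1, hv2⟩ := hv
      have hv3 : Fin.cons (0 : ZMod 2) (Fin.tail v) = v := by
        rw [← hv2]; exact Fin.cons_self_tail v
      intro h
      apply hv1
      rw [← hv3, heval, h, zero_mul, add_zero]
    · intro x hx
      simp only [Finset.mem_filter, Finset.mem_univ, true_and] at hx ⊢
      refine ⟨?_, Fin.cons_zero _ _⟩
      rw [heval, zero_mul, add_zero]
      exact hx
    · intro v hv
      simp only [Finset.mem_filter, Finset.mem_univ, true_and] at hv
      have h := Fin.cons_self_tail (α := fun _ => ZMod 2) v
      rw [hv.2] at h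
      exact h
    · intro x _
      exact Fin.tail_cons _ _
  · refine Finset.card_bij' (fun v _ => Fin.tail v) (fun x _ => Fin.cons (1 : ZMod 2) x) ?_ ?_ ?_ ?_
    · intro v hv
      simp only [Finset.mem_filter, Finset.mem_univ, true_and] at hv ⊢
      obtain ⟨hv1, hv2⟩ := hv
      have hv3 : Fin.cons (1 : ZMod 2) (Fin.tail v) = v := by
        rw [← h1 _ hv2]; exact Fin.cons_self_tail v
      intro h
      apply hv1
      rw [← hv3, heval]
      rw [map_add] at h
      rw [one_mul]
      exact h
    · intro x hx
      simp only [Finset.mem_filter, Finset.mem_univ, true_and] at hx ⊢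
      refine ⟨?_, by rw [Fin.cons_zero]; exact one_ne_zero⟩
      rw [heval, one_mul]
      rw [map_add] at hx
      exact hx
    · intro v hv
      simp only [Finset.mem_filter, Finset.mem_univ, true_and] at hv
      have h := Fin.cons_self_tail (α := fun _ => ZMod 2) v
      rw [h1 _ hv.2] at h
      exact h
    · intro x _
      exact Fin.tail_cons _ _

private lemma rm_main : ∀ (m r : ℕ) (p : MvPolynomial (Fin m) (ZMod 2)), p ≠ 0 →
    (∀ d ∈ p.support, ∀ i, d i ≤ 1) → p.totalDegree ≤ r → r ≤ m →
    2 ^ (m - r) ≤ Ncount p := by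
  intro m
  induction m with
  | zero =>
    intro r p hp hml hdeg hr
    have hr0 : r = 0 := Nat.le_zero.mp hr
    subst hr0
    simp only [Nat.zero_sub, pow_zero]
    rw [Nat.one_le_iff_ne_zero, ← Nat.pos_iff_ne_zero, Ncount, Finset.card_pos]
    obtain ⟨d, hd⟩ := MvPolynomial.ne_zero_iff.mp hp
    have hd0 : d = 0 := Finsupp.ext fun i => i.elim0
    subst hd0
    refine ⟨fun i => i.elim0, ?_⟩
    simp only [Finset.mem_filter, Finset.mem_univ, true_and]
    have hpC : p = MvPolynomial.C (MvPolynomial.coeff 0 p) := by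
      ext d'
      have : d' = 0 := Finsupp.ext fun i => i.elim0
      subst this
      simp
    rw [hpC, MvPolynomial.eval_C]
    exact hd
  | succ n IH =>
    intro r p hp hml hdeg hr
    set P : Polynomial (MvPolynomial (Fin n) (ZMod 2)) := finSuccEquiv (ZMod 2) n p with hPdef
    set q := P.coeff 0 with hq
    set s := P.coeff 1 with hs
    -- coefficients vanish above 1
    have hc2 : ∀ i, 2 ≤ i → P.coeff i = 0 := by
      intro i hi
      by_contra hne
      obtain ⟨d, hd⟩ := MvPolynomial.ne_zero_iff.mp hne
      have hd' : Finsupp.cons i d ∈ p.support :=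
        MvPolynomial.mem_support_coeff_finSuccEquiv.mp (MvPolynomial.mem_support_iff.mpr hd)
      have := hml _ hd' 0
      rw [Finsupp.cons_zero] at this
      omega
    have hP : P = Polynomial.C q + Polynomial.X * Polynomial.C s := by
      ext i
      match i with
      | 0 => simp [hq]
      | 1 => simp [hs]
      | (k + 2) =>
        rw [hc2 _ (by omega)]
        simp [Polynomial.coeff_C, Polynomial.coeff_X_mul]
    have heval : ∀ (y : ZMod 2) (x : Fin n → ZMod 2),
        MvPolynomial.eval (Fin.cons y x) p = MvPolynomial.eval x q + y * MvPolynomial.eval x s := by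
      intro y x
      rw [MvPolynomial.eval_eq_eval_mv_eval', ← hPdef, hP]
      rw [Polynomial.map_add, Polynomial.map_mul, Polynomial.map_C, Polynomial.map_C,
        Polynomial.map_X, Polynomial.eval_add, Polynomial.eval_mul, Polynomial.eval_C,
        Polynomial.eval_C, Polynomial.eval_X, mul_comm]
    have hcount : Ncount p = Ncount q + Ncount (q + s) := split_count p q s heval
    -- multilinearity transfer
    have hmlc : ∀ i : ℕ, ∀ d ∈ (P.coeff i).support, ∀ j, d j ≤ 1 := by
      intro i d hd j
      have hd' : Finsupp.cons i d ∈ p.support := MvPolynomial.mem_support_coeff_finSuccEquiv.mp hd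
      have := hml _ hd' j.succ
      rwa [Finsupp.cons_succ] at this
    have hmlq : ∀ d ∈ q.support, ∀ j, d j ≤ 1 := hmlc 0
    have hmls : ∀ d ∈ s.support, ∀ j, d j ≤ 1 := hmlc 1
    have hmlqs : ∀ d ∈ (q + s).support, ∀ j, d j ≤ 1 := by
      intro d hd j
      rcases Finset.mem_union.mp (MvPolynomial.support_add hd) with h | h
      · exact hmlq d h j
      · exact hmls d h j
    -- q and s not both zero
    have hnotboth : ¬(q = 0 ∧ s = 0) := by
      rintro ⟨h0, h1⟩
      apply hp
      have : P = 0 := by rw [hP, h0, h1]; simp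
      exact (EmbeddingLike.map_eq_zero_iff (f := finSuccEquiv (ZMod 2) n)).mp this
    -- degree bounds
    have hq_deg : q ≠ 0 → q.totalDegree ≤ min r n := by
      intro hq0
      refine le_min ?_ (ml_totalDegree q hmlq)
      have := MvPolynomial.totalDegree_coeff_finSuccEquiv_add_le p 0 (by rwa [← hPdef, ← hq])
      rw [← hPdef, ← hq, add_zero] at this
      exact this.trans hdeg
    have hs_deg : s ≠ 0 → s.totalDegree + 1 ≤ r := by
      intro hs0
      have := MvPolynomial.totalDegree_coeff_finSuccEquiv_add_le p 1 (by rwa [← hPdef, ← hs])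
      rw [← hPdef, ← hs] at this
      exact this.trans hdeg
    by_cases hs0 : s = 0
    · -- p depends only on the tail variables
      have hq0 : q ≠ 0 := fun h => hnotboth ⟨h, hs0⟩
      have h1 := IH (min r n) q hq0 hmlq (hq_deg hq0) (min_le_right _ _)
      rw [hcount, hs0, add_zero]
      calc 2 ^ (n + 1 - r) ≤ 2 ^ (n - min r n) + 2 ^ (n - min r n) := by
            rw [← two_mul, ← pow_succ']
            exact Nat.pow_le_pow_right (by norm_num) (by omega)
        _ ≤ Ncount q + Ncount q := Nat.add_le_add h1 h1
    · have hr1 : s.totalDegree + 1 ≤ r := hs_deg hs0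
      have hsdeg' : s.totalDegree ≤ min (r - 1) n := le_min (by omega) (ml_totalDegree s hmls)
      by_cases hq0 : q = 0
      · -- p = x₀ * s
        rw [hcount, hq0, Ncount_zero, zero_add, zero_add]
        have h1 := IH (min (r - 1) n) s hs0 hmls hsdeg' (min_le_right _ _)
        calc 2 ^ (n + 1 - r) ≤ 2 ^ (n - min (r - 1) n) :=
              Nat.pow_le_pow_right (by norm_num) (by omega)
          _ ≤ Ncount s := h1
      · by_cases hqs0 : q + s = 0
        · -- q = s (characteristic 2), degree ≤ r - 1
          have hqneg : q = -s := eq_neg_of_add_eq_zero_left hqs0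
          have hqdeg' : q.totalDegree ≤ min (r - 1) n := by
            rw [hqneg, MvPolynomial.totalDegree_neg]
            exact hsdeg'
          rw [hcount, hqs0, Ncount_zero, add_zero]
          have h1 := IH (min (r - 1) n) q hq0 hmlq hqdeg' (min_le_right _ _)
          calc 2 ^ (n + 1 - r) ≤ 2 ^ (n - min (r - 1) n) :=
                Nat.pow_le_pow_right (by norm_num) (by omega)
            _ ≤ Ncount q := h1
        · -- both nonzero
          have hqs_deg : (q + s).totalDegree ≤ min r n := by
            refine le_min ?_ (ml_totalDegree _ hmlqs)
            refine (MvPolynomial.totalDegree_add q s).trans ?_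
            have := hq_deg hq0
            omega
          have h1 := IH (min r n) q hq0 hmlq (hq_deg hq0) (min_le_right _ _)
          have h2 := IH (min r n) (q + s) hqs0 hmlqs hqs_deg (min_le_right _ _)
          rw [hcount]
          calc 2 ^ (n + 1 - r) ≤ 2 ^ (n - min r n) + 2 ^ (n - min r n) := by
                rw [← two_mul, ← pow_succ']
                exact Nat.pow_le_pow_right (by norm_num) (by omega)
            _ ≤ Ncount q + Ncount (q + s) := Nat.add_le_add h1 h2

/-- Minimum distance of the Reed–Muller code RM(r,m): every nonzero multilinear
polynomial of degree ≤ r in m variables over F₂ has at least 2^{m-r} nonzero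
evaluations on F₂^m. -/
theorem reed_muller_min_distance (m r : ℕ) (hr : r ≤ m)
    (p : MvPolynomial (Fin m) (ZMod 2)) (hp : p ≠ 0)
    (hml : ∀ d ∈ p.support, ∀ i, d i ≤ 1)
    (hdeg : p.totalDegree ≤ r) :
    2 ^ (m - r) ≤ Nat.card {x : Fin m → ZMod 2 // MvPolynomial.eval x p ≠ 0} := by
  have h := rm_main m r p hp hml hdeg hr
  rw [Nat.card_eq_fintype_card, Fintype.card_subtype]
  exact h
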